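/- Closed-loop gain-difference identity: let P, P̃ be symmetric positive semidefinite m × m matrices with P ≤ P̃, H a d × m matrix, R a d × d symmetric positive definite matrix, F an m × m matrix, and define K = P Hᵀ (H P Hᵀ + R)⁻¹, K̃ = P̃ Hᵀ (H P̃ Hᵀ + R)⁻¹, F_c = (I − K H) F, F̃_c = (I − K̃ H) F. Then F_c − F̃_c = (I + P Hᵀ R⁻¹ H)⁻¹ (P̃ − P) Hᵀ (H P̃ Hᵀ + R)⁻¹ H F. -/

import Mathlib

open Matrix

/-- Closed-loop gain-difference identity: with
`F_c = (I − P Hᵀ (H P Hᵀ + R)⁻¹ H) F` and `F̃_c` defined analogously with `P̃`,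
`F_c − F̃_c = (I + P Hᵀ R⁻¹ H)⁻¹ (P̃ − P) Hᵀ (H P̃ Hᵀ + R)⁻¹ H F`. -/
theorem closed_loop_gain_difference {m d : ℕ}
    (P Ptil : Matrix (Fin m) (Fin m) ℝ)
    (hP : P.PosSemidef) (hPtil : Ptil.PosSemidef)
    (hle : (Ptil - P).PosSemidef)
    (H : Matrix (Fin d) (Fin m) ℝ)
    (R : Matrix (Fin d) (Fin d) ℝ) (hR : R.PosDef)
    (F : Matrix (Fin m) (Fin m) ℝ)
    (hu : IsUnit (1 + P * Hᵀ * R⁻¹ * H)) :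
    (1 - P * Hᵀ * (H * P * Hᵀ + R)⁻¹ * H) * F -
      (1 - Ptil * Hᵀ * (H * Ptil * Hᵀ + R)⁻¹ * H) * F =
    (1 + P * Hᵀ * R⁻¹ * H)⁻¹ * (Ptil - P) * Hᵀ * (H * Ptil * Hᵀ + R)⁻¹ * H * F := by
  set A : Matrix (Fin m) (Fin m) ℝ := 1 + P * Hᵀ * R⁻¹ * H with hAdef
  set S : Matrix (Fin d) (Fin d) ℝ := H * P * Hᵀ + R with hSdef
  set St : Matrix (Fin d) (Fin d) ℝ := H * Ptil * Hᵀ + R with hStdef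
  have hHPH : (H * P * Hᵀ).PosSemidef := by
    have := hP.mul_mul_conjTranspose_same H
    simpa [Matrix.conjTranspose_eq_transpose_of_trivial, Matrix.mul_assoc] using this
  have hHPtH : (H * Ptil * Hᵀ).PosSemidef := by
    have := hPtil.mul_mul_conjTranspose_same H
    simpa [Matrix.conjTranspose_eq_transpose_of_trivial, Matrix.mul_assoc] using this
  have hS : S.PosDef := Matrix.PosDef.posSemidef_add hHPH hR
  have hSt : St.PosDef := Matrix.PosDef.posSemidef_add hHPtH hR
  have hSinv : S * S⁻¹ = 1 :=
    Matrix.mul_nonsing_inv _ (Matrix.isUnit_iff_isUnit_det _ |>.1 hS.isUnit)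
  have hStinv : St * St⁻¹ = 1 :=
    Matrix.mul_nonsing_inv _ (Matrix.isUnit_iff_isUnit_det _ |>.1 hSt.isUnit)
  have hRinv : R⁻¹ * R = 1 :=
    Matrix.nonsing_inv_mul _ (Matrix.isUnit_iff_isUnit_det _ |>.1 hR.isUnit)
  have hAinv : A⁻¹ * A = 1 :=
    Matrix.nonsing_inv_mul _ (Matrix.isUnit_iff_isUnit_det _ |>.1 hu)
  -- Key identities
  have key1 : P * Hᵀ * R⁻¹ * (H * P * Hᵀ) * S⁻¹ = P * Hᵀ * R⁻¹ - P * Hᵀ * S⁻¹ := by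
    have h1 : H * P * Hᵀ = S - R := by rw [hSdef]; abel
    rw [h1, Matrix.mul_sub, Matrix.sub_mul]
    rw [Matrix.mul_assoc (P * Hᵀ * R⁻¹) S S⁻¹, hSinv, Matrix.mul_one]
    rw [Matrix.mul_assoc (P * Hᵀ) R⁻¹ R, hRinv, Matrix.mul_one]
  have key2 : P * Hᵀ * R⁻¹ * (H * Ptil * Hᵀ) * St⁻¹ = P * Hᵀ * R⁻¹ - P * Hᵀ * St⁻¹ := by
    have h1 : H * Ptil * Hᵀ = St - R := by rw [hStdef]; abel
    rw [h1, Matrix.mul_sub, Matrix.sub_mul]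
    rw [Matrix.mul_assoc (P * Hᵀ * R⁻¹) St St⁻¹, hStinv, Matrix.mul_one]
    rw [Matrix.mul_assoc (P * Hᵀ) R⁻¹ R, hRinv, Matrix.mul_one]
  have main : A * (Ptil * Hᵀ * St⁻¹ - P * Hᵀ * S⁻¹) = (Ptil - P) * Hᵀ * St⁻¹ := by
    have e1 : A * (Ptil * Hᵀ * St⁻¹) =
        Ptil * Hᵀ * St⁻¹ + (P * Hᵀ * R⁻¹ - P * Hᵀ * St⁻¹) := by
      rw [hAdef, Matrix.add_mul, Matrix.one_mul, ← key2]
      simp only [Matrix.mul_assoc]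
    have e2 : A * (P * Hᵀ * S⁻¹) = P * Hᵀ * R⁻¹ := by
      rw [hAdef, Matrix.add_mul, Matrix.one_mul]
      have h : P * Hᵀ * R⁻¹ * H * (P * Hᵀ * S⁻¹) =
          P * Hᵀ * R⁻¹ * (H * P * Hᵀ) * S⁻¹ := by
        simp only [Matrix.mul_assoc]
      rw [h, key1]; abel
    rw [Matrix.mul_sub, e1, e2, Matrix.sub_mul, Matrix.sub_mul]
    abel
  have hLHS : (1 - P * Hᵀ * S⁻¹ * H) * F - (1 - Ptil * Hᵀ * St⁻¹ * H) * F =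
      (Ptil * Hᵀ * St⁻¹ - P * Hᵀ * S⁻¹) * (H * F) := by
    rw [Matrix.sub_mul, Matrix.sub_mul, Matrix.one_mul, Matrix.sub_mul]
    simp only [Matrix.mul_assoc]
    abel
  rw [hLHS]
  have hassoc : A⁻¹ * (Ptil - P) * Hᵀ * St⁻¹ * H * F =
      A⁻¹ * ((Ptil - P) * Hᵀ * St⁻¹) * (H * F) := by
    simp only [Matrix.mul_assoc]
  rw [hassoc, ← main]
  rw [← Matrix.mul_assoc A⁻¹ A (Ptil * Hᵀ * St⁻¹ - P * Hᵀ * S⁻¹), hAinv, Matrix.one_mul]
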